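/- Let α ∈ ℝ be irrational and let ψ: (0,∞) → (0,∞) be decreasing. Assume there exist infinitely many pairs of odd integers u, v with v ≥ 1 such that |α − u/v| ≤ ψ(v)/v. Then there exists C > 0 such that for every t₀ ∈ ℝ there exists t ≥ t₀ with |1 + (e^{it} + e^{itα})/2| ≤ C · (ψ(t/π − 1))². -/

import Mathlib

open Real

private lemma one_sub_cos_le_sq (x : ℝ) : 1 - Real.cos x ≤ x ^ 2 / 2 := by
  have h := Real.cos_two_mul' (x / 2)
  have hx : 2 * (x / 2) = x := by ring
  rw [hx] at h
  have hpy := Real.sin_sq_add_cos_sq (x / 2)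
  have hs : Real.sin (x / 2) ^ 2 ≤ (x / 2) ^ 2 := by
    rw [← sq_abs, ← sq_abs (x / 2)]
    exact pow_le_pow_left₀ (abs_nonneg _) Real.abs_sin_le_abs 2
  nlinarith

private lemma abs_helper (t α : ℝ) (k : ℤ) (h : t * α = (k : ℝ) * (2 * π) - t) :
    ‖1 + (Complex.exp ((t : ℂ) * Complex.I)
        + Complex.exp ((t : ℂ) * (α : ℂ) * Complex.I)) / 2‖ = 1 + Real.cos t := by
  have e2 : (t : ℂ) * (α : ℂ) * Complex.I = ((t * α : ℝ) : ℂ) * Complex.I := by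
    push_cast; ring
  rw [e2, Complex.exp_mul_I, Complex.exp_mul_I]
  have hc : Complex.cos ((t * α : ℝ) : ℂ) = ((Real.cos t : ℝ) : ℂ) := by
    rw [← Complex.ofReal_cos, h, Real.cos_int_mul_two_pi_sub]
  have hs : Complex.sin ((t * α : ℝ) : ℂ) = ((-Real.sin t : ℝ) : ℂ) := by
    rw [← Complex.ofReal_sin, h, Real.sin_int_mul_two_pi_sub]
  rw [hc, hs]
  have key : (1 : ℂ) + ((Complex.cos (t : ℂ) + Complex.sin (t : ℂ) * Complex.I)
      + (((Real.cos t : ℝ) : ℂ) + ((-Real.sin t : ℝ) : ℂ) * Complex.I)) / 2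
      = ((1 + Real.cos t : ℝ) : ℂ) := by
    rw [← Complex.ofReal_cos, ← Complex.ofReal_sin]; push_cast; ring
  rw [key, Complex.norm_real, Real.norm_eq_abs, abs_of_nonneg (by nlinarith [Real.neg_one_le_cos t])]

private lemma key_lemma (α : ℝ) (hα1 : (1 : ℝ) + α ≠ 0) (u v : ℤ) (hu : Odd u)
    (hv : Odd v) (hv1 : 1 ≤ v) (ψv : ℝ)
    (happ : |α - (u : ℝ) / (v : ℝ)| ≤ ψv / (v : ℝ)) :
    ∃ t ε : ℝ, t = (v : ℝ) * π + ε ∧ |ε| ≤ π * ψv / |1 + α| ∧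
      ‖1 + (Complex.exp ((t : ℂ) * Complex.I)
          + Complex.exp ((t : ℂ) * (α : ℂ) * Complex.I)) / 2‖ = 1 - Real.cos ε := by
  have hvR : (0 : ℝ) < (v : ℝ) := by exact_mod_cast hv1
  set t : ℝ := ((u : ℝ) + (v : ℝ)) * π / (1 + α) with ht
  refine ⟨t, t - (v : ℝ) * π, by ring, ?_, ?_⟩
  · -- bound on ε
    have h3 : |(v : ℝ) * α - (u : ℝ)| ≤ ψv := by
      have h4 := mul_le_mul_of_nonneg_left happ (le_of_lt hvR)
      have h5 : (v : ℝ) * |α - (u : ℝ) / (v : ℝ)| = |(v : ℝ) * α - (u : ℝ)| := by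
        have he : (v : ℝ) * α - (u : ℝ) = (v : ℝ) * (α - (u : ℝ) / (v : ℝ)) := by
          field_simp
        rw [he, abs_mul, abs_of_pos hvR]
      have h6 : (v : ℝ) * (ψv / (v : ℝ)) = ψv := mul_div_cancel₀ _ (ne_of_gt hvR)
      rw [h5, h6] at h4; exact h4
    have hε : t - (v : ℝ) * π = ((u : ℝ) - (v : ℝ) * α) * π / (1 + α) := by
      rw [ht]; field_simp; ring
    rw [hε, abs_div, abs_mul, abs_of_pos Real.pi_pos, abs_sub_comm, mul_comm]
    gcongr
  · -- the modulus computation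
    obtain ⟨k, hk⟩ : Even (u + v) := hu.add_odd hv
    have hk' : ((u : ℝ) + (v : ℝ)) = 2 * (k : ℝ) := by
      have : u + v = 2 * k := by omega
      exact_mod_cast this
    have htsum : t * (1 + α) = ((u : ℝ) + (v : ℝ)) * π := div_mul_cancel₀ _ hα1
    have htα : t * α = (k : ℝ) * (2 * π) - t := by
      have hexp : t * (1 + α) = t + t * α := by ring
      rw [hexp, hk'] at htsum; linarith
    rw [abs_helper t α k htα]
    have ht2 : t = (t - (v : ℝ) * π) + (v : ℝ) * π := by ring
    rw [ht2, Real.cos_add_int_mul_pi, hv.neg_one_zpow]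
    ring

set_option maxHeartbeats 1000000 in
/-- If `α` is irrational and there are infinitely many odd/odd rational approximations
`|α - u/v| ≤ ψ(v)/v`, then `g(t) = |1 + (e^{it} + e^{itα})/2|` is bounded by
`C (ψ(t/π - 1))²` for arbitrarily large `t`. -/
theorem g_small_of_oddOdd_approx (α : ℝ) (hα : Irrational α) (ψ : ℝ → ℝ)
    (hψpos : ∀ t : ℝ, 0 < t → 0 < ψ t) (hψdec : AntitoneOn ψ (Set.Ioi 0))
    (happrox : {p : ℤ × ℤ | Odd p.1 ∧ Odd p.2 ∧ 1 ≤ p.2 ∧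
        |α - (p.1 : ℝ) / (p.2 : ℝ)| ≤ ψ (p.2 : ℝ) / (p.2 : ℝ)}.Infinite) :
    ∃ C : ℝ, 0 < C ∧ ∀ t₀ : ℝ, ∃ t : ℝ, t₀ ≤ t ∧
      ‖1 + (Complex.exp ((t : ℂ) * Complex.I)
          + Complex.exp ((t : ℂ) * (α : ℂ) * Complex.I)) / 2‖
        ≤ C * (ψ (t / Real.pi - 1)) ^ 2 := by
  have hα1 : (1 : ℝ) + α ≠ 0 := by
    intro h
    exact hα.ne_int (-1) (by push_cast; linarith)
  set c : ℝ := |1 + α| with hcdef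
  have hc0 : 0 < c := abs_pos.2 hα1
  have hψ1 : 0 < ψ 1 := hψpos 1 one_pos
  -- arbitrarily large v in the approximation set
  have hbig : ∀ B : ℤ, ∃ p : ℤ × ℤ, (Odd p.1 ∧ Odd p.2 ∧ 1 ≤ p.2 ∧
      |α - (p.1 : ℝ) / (p.2 : ℝ)| ≤ ψ (p.2 : ℝ) / (p.2 : ℝ)) ∧ B ≤ p.2 := by
    intro B
    by_contra hcon
    push_neg at hcon
    apply happrox
    apply Set.Finite.subset (Set.finite_Icc ((-⌈(B : ℝ) * (|α| + ψ 1)⌉, 1) : ℤ × ℤ)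
      (⌈(B : ℝ) * (|α| + ψ 1)⌉, B))
    rintro ⟨u, v⟩ hmem
    obtain ⟨hu, hv, hv1, happ⟩ := hmem
    have hvB : v < B := by
      by_contra hge
      exact absurd (le_of_not_gt hge) (by simpa using (hcon (u, v) ⟨hu, hv, hv1, happ⟩))
    have hvR : (0 : ℝ) < (v : ℝ) := by exact_mod_cast hv1
    have hv1R : (1 : ℝ) ≤ (v : ℝ) := by exact_mod_cast hv1
    have hψv : ψ (v : ℝ) ≤ ψ 1 :=
      hψdec (Set.mem_Ioi.2 one_pos) (Set.mem_Ioi.2 hvR) hv1R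
    have hψvpos : 0 < ψ (v : ℝ) := hψpos _ hvR
    have huv : |(u : ℝ)| ≤ (v : ℝ) * (|α| + ψ 1) := by
      have h1 : |(u : ℝ) / (v : ℝ)| ≤ |α| + ψ (v : ℝ) / (v : ℝ) := by
        have := abs_sub_abs_le_abs_sub ((u : ℝ) / (v : ℝ)) α
        have h2 : |(u : ℝ) / (v : ℝ) - α| = |α - (u : ℝ) / (v : ℝ)| := abs_sub_comm _ _
        linarith [h2 ▸ this, happ]
      have h3 : ψ (v : ℝ) / (v : ℝ) ≤ ψ 1 := by
        calc ψ (v : ℝ) / (v : ℝ) ≤ ψ (v : ℝ) / 1 := by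
              apply div_le_div_of_nonneg_left (le_of_lt hψvpos) one_pos hv1R
          _ ≤ ψ 1 := by rw [div_one]; exact hψv
      have h4 : |(u : ℝ)| = |(u : ℝ) / (v : ℝ)| * (v : ℝ) := by
        rw [abs_div, abs_of_pos hvR, div_mul_cancel₀ _ (ne_of_gt hvR)]
      rw [h4]
      have := abs_nonneg ((u : ℝ) / (v : ℝ))
      nlinarith
    have hvBR : (v : ℝ) ≤ (B : ℝ) := by exact_mod_cast le_of_lt hvB
    have hfac : 0 ≤ |α| + ψ 1 := by positivity
    have huB : |(u : ℝ)| ≤ (B : ℝ) * (|α| + ψ 1) := by nlinarith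
    have huceil : |(u : ℝ)| ≤ (⌈(B : ℝ) * (|α| + ψ 1)⌉ : ℝ) :=
      le_trans huB (Int.le_ceil _)
    have huInt : |u| ≤ ⌈(B : ℝ) * (|α| + ψ 1)⌉ := by
      have : (|u| : ℝ) ≤ (⌈(B : ℝ) * (|α| + ψ 1)⌉ : ℝ) := by push_cast; exact huceil
      exact_mod_cast this
    rw [Set.mem_Icc]
    constructor
    · exact ⟨neg_le_of_abs_le huInt, hv1⟩
    · exact ⟨(abs_le.mp huInt).2, le_of_lt hvB⟩
  -- the constant
  refine ⟨π ^ 2 / (2 * c ^ 2) + 2 / c ^ 2, by positivity, ?_⟩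
  intro t₀
  by_cases hA : ∃ x : ℝ, 0 < x ∧ ψ x ≤ c
  · -- case A : ψ eventually ≤ c
    obtain ⟨x₀, hx₀pos, hx₀⟩ := hA
    obtain ⟨⟨u, v⟩, ⟨hu, hv, hv1, happ⟩, hvB⟩ :=
      hbig (max 3 ⌈max x₀ (t₀ / π + 1)⌉)
    have hv3 : (3 : ℝ) ≤ (v : ℝ) := by exact_mod_cast le_trans (le_max_left _ _) hvB
    have hvx : max x₀ (t₀ / π + 1) ≤ (v : ℝ) := by
      calc max x₀ (t₀ / π + 1) ≤ (⌈max x₀ (t₀ / π + 1)⌉ : ℝ) := Int.le_ceil _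
        _ ≤ (v : ℝ) := by exact_mod_cast le_trans (le_max_right _ _) hvB
    have hvx₀ : x₀ ≤ (v : ℝ) := le_trans (le_max_left _ _) hvx
    have hvt₀ : t₀ / π + 1 ≤ (v : ℝ) := le_trans (le_max_right _ _) hvx
    have hvR : (0 : ℝ) < (v : ℝ) := by linarith
    obtain ⟨t, ε, htε, hεbd, habs⟩ := key_lemma α hα1 u v hu hv hv1 (ψ (v : ℝ)) happ
    have hψv : ψ (v : ℝ) ≤ c := le_trans
      (hψdec (Set.mem_Ioi.2 hx₀pos) (Set.mem_Ioi.2 hvR) hvx₀) hx₀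
    have hψvpos : 0 < ψ (v : ℝ) := hψpos _ hvR
    have hεπ : |ε| ≤ π := by
      calc |ε| ≤ π * ψ (v : ℝ) / c := hεbd
        _ ≤ π := by rw [div_le_iff₀ hc0]; nlinarith [Real.pi_pos]
    have hεle : ε ≤ π := le_trans (le_abs_self ε) hεπ
    have hεge : -π ≤ ε := neg_le_of_abs_le hεπ
    have hπ : (0 : ℝ) < π := Real.pi_pos
    have htval : t / π - 1 = (v : ℝ) - 1 + ε / π := by
      rw [htε]; field_simp; ring
    have ht1 : 0 < t / π - 1 := by
      rw [htval]
      have : -1 ≤ ε / π := by rw [le_div_iff₀ hπ]; linarith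
      linarith
    have ht2 : t / π - 1 ≤ (v : ℝ) := by
      rw [htval]
      have : ε / π ≤ 1 := by rw [div_le_one hπ]; exact hεle
      linarith
    have hψmono : ψ (v : ℝ) ≤ ψ (t / π - 1) :=
      hψdec (Set.mem_Ioi.2 ht1) (Set.mem_Ioi.2 hvR) ht2
    have hψtpos : 0 < ψ (t / π - 1) := hψpos _ ht1
    refine ⟨t, ?_, ?_⟩
    · rw [htε]
      have : t₀ ≤ (v : ℝ) * π - π := by
        rw [div_add' _ _ _ (ne_of_gt hπ), div_le_iff₀ hπ] at hvt₀; linarith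
      linarith
    · rw [habs]
      have h1 : 1 - Real.cos ε ≤ ε ^ 2 / 2 := one_sub_cos_le_sq ε
      have h2 : ε ^ 2 ≤ (π * ψ (v : ℝ) / c) ^ 2 := by
        rw [← sq_abs]
        apply pow_le_pow_left₀ (abs_nonneg _) hεbd
      have h3 : ψ (v : ℝ) ^ 2 ≤ ψ (t / π - 1) ^ 2 := by
        apply pow_le_pow_left₀ (le_of_lt hψvpos) hψmono
      have h4 : (π * ψ (v : ℝ) / c) ^ 2 = π ^ 2 / c ^ 2 * ψ (v : ℝ) ^ 2 := by
        field_simp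
      have hc2 : 0 < c ^ 2 := by positivity
      have hπ2 : 0 ≤ π ^ 2 / c ^ 2 := by positivity
      calc 1 - Real.cos ε ≤ ε ^ 2 / 2 := h1
        _ ≤ π ^ 2 / c ^ 2 * ψ (v : ℝ) ^ 2 / 2 := by rw [← h4]; linarith
        _ ≤ π ^ 2 / c ^ 2 * ψ (t / π - 1) ^ 2 / 2 := by
            have := mul_le_mul_of_nonneg_left h3 hπ2; linarith
        _ ≤ (π ^ 2 / (2 * c ^ 2) + 2 / c ^ 2) * ψ (t / π - 1) ^ 2 := by
            have h5 : (0 : ℝ) ≤ 2 / c ^ 2 := by positivity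
            have h6 : 0 ≤ 2 / c ^ 2 * ψ (t / π - 1) ^ 2 := mul_nonneg h5 (sq_nonneg _)
            have heq : π ^ 2 / c ^ 2 * ψ (t / π - 1) ^ 2 / 2
                = π ^ 2 / (2 * c ^ 2) * ψ (t / π - 1) ^ 2 := by ring
            rw [heq, add_mul]; linarith
  · -- case B : ψ always > c
    push_neg at hA
    obtain ⟨⟨u, v⟩, ⟨hu, hv, hv1, happ⟩, hvB⟩ :=
      hbig (max 3 ⌈max (2 + ψ 1 / c) ((t₀ + π * ψ 1 / c) / π + 1)⌉)
    have hvx : max (2 + ψ 1 / c) ((t₀ + π * ψ 1 / c) / π + 1) ≤ (v : ℝ) := by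
      calc max (2 + ψ 1 / c) ((t₀ + π * ψ 1 / c) / π + 1)
          ≤ (⌈max (2 + ψ 1 / c) ((t₀ + π * ψ 1 / c) / π + 1)⌉ : ℝ) := Int.le_ceil _
        _ ≤ (v : ℝ) := by exact_mod_cast le_trans (le_max_right _ _) hvB
    have hv2 : 2 + ψ 1 / c ≤ (v : ℝ) := le_trans (le_max_left _ _) hvx
    have hvt₀ : (t₀ + π * ψ 1 / c) / π + 1 ≤ (v : ℝ) := le_trans (le_max_right _ _) hvx
    have hψc : 0 < ψ 1 / c := by positivity
    have hvR : (0 : ℝ) < (v : ℝ) := by linarith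
    have hv1R : (1 : ℝ) ≤ (v : ℝ) := by linarith
    obtain ⟨t, ε, htε, hεbd, habs⟩ := key_lemma α hα1 u v hu hv hv1 (ψ (v : ℝ)) happ
    have hψv1 : ψ (v : ℝ) ≤ ψ 1 :=
      hψdec (Set.mem_Ioi.2 one_pos) (Set.mem_Ioi.2 hvR) hv1R
    have hπ : (0 : ℝ) < π := Real.pi_pos
    have hεM : |ε| ≤ π * ψ 1 / c := by
      calc |ε| ≤ π * ψ (v : ℝ) / c := hεbd
        _ ≤ π * ψ 1 / c := by
            rw [div_le_div_iff₀ hc0 hc0]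
            have := mul_le_mul_of_nonneg_right
              (mul_le_mul_of_nonneg_left hψv1 hπ.le) hc0.le
            linarith
    have hεge : -(π * ψ 1 / c) ≤ ε := neg_le_of_abs_le hεM
    have htval : t / π - 1 = (v : ℝ) - 1 + ε / π := by
      rw [htε]; field_simp; ring
    have ht1 : 0 < t / π - 1 := by
      rw [htval]
      have h6 : -(ψ 1 / c) ≤ ε / π := by
        rw [le_div_iff₀ hπ]
        have heq : -(ψ 1 / c) * π = -(π * ψ 1 / c) := by ring
        rw [heq]; exact hεge
      linarith
    have hψt : c < ψ (t / π - 1) := hA _ ht1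
    refine ⟨t, ?_, ?_⟩
    · rw [htε]
      have h7 : t₀ + π * ψ 1 / c ≤ ((v : ℝ) - 1) * π := by
        rw [div_add' _ _ _ (ne_of_gt hπ), div_le_iff₀ hπ] at hvt₀; nlinarith
      nlinarith [hεge]
    · rw [habs]
      have h8 : 1 - Real.cos ε ≤ 2 := by linarith [Real.neg_one_le_cos ε]
      have h9 : c ^ 2 ≤ ψ (t / π - 1) ^ 2 := by nlinarith
      have hc2 : 0 < c ^ 2 := pow_pos hc0 2
      have h10 : 2 ≤ 2 / c ^ 2 * ψ (t / π - 1) ^ 2 := by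
        have h12 : 2 / c ^ 2 * c ^ 2 ≤ 2 / c ^ 2 * ψ (t / π - 1) ^ 2 :=
          mul_le_mul_of_nonneg_left h9 (by positivity)
        rwa [div_mul_cancel₀ _ (ne_of_gt hc2)] at h12
      have h11 : (0 : ℝ) ≤ π ^ 2 / (2 * c ^ 2) := by positivity
      have h13 : 0 ≤ π ^ 2 / (2 * c ^ 2) * ψ (t / π - 1) ^ 2 :=
        mul_nonneg h11 (sq_nonneg _)
      rw [add_mul]
      linarith
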